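/- For all α ∈ (0,1/2), the function g(α) := 3·h((1/3) ∗ α) − 2 − h(α) is strictly decreasing, with derivative g'(α) = log₂((2α − α²)/(1 − α²)) < 0; moreover g(1/2) = 0, so g(α) ≥ 0 for all α ∈ [0,1/2]. -/

import Mathlib

/-- Binary entropy function (in bits). -/
noncomputable def binEnt (a : ℝ) : ℝ :=
  -(a * Real.logb 2 a) - ((1 - a) * Real.logb 2 (1 - a))

/-- `g(α) := 3·h((1/3) ∗ α) − 2 − h(α)`, where `(1/3) ∗ α = (1+α)/3`. -/
noncomputable def gfun (α : ℝ) : ℝ := 3 * binEnt ((1 + α) / 3) - 2 - binEnt α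

lemma binEnt_eq : binEnt = fun a => (-(a * Real.log a) - ((1 - a) * Real.log (1 - a))) / Real.log 2 := by
  funext a
  simp only [binEnt, Real.logb]
  ring

lemma binEnt_continuous : Continuous binEnt := by
  rw [binEnt_eq]
  have h := Real.continuous_mul_log
  exact (h.neg.sub (h.comp (continuous_const.sub continuous_id))).div_const _

lemma binEnt_hasDerivAt {a : ℝ} (h0 : 0 < a) (h1 : a < 1) :
    HasDerivAt binEnt (Real.logb 2 (1 - a) - Real.logb 2 a) a := by
  have hml : HasDerivAt (fun x : ℝ => x * Real.log x) (Real.log a + 1) a := by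
    have : HasDerivAt (fun x : ℝ => x * Real.log x) (1 * Real.log a + id a * a⁻¹) a :=
      (hasDerivAt_id a).mul (Real.hasDerivAt_log h0.ne')
    convert this using 1
    simp [h0.ne']
  have hone : HasDerivAt (fun x : ℝ => (1 - x)) (-1 : ℝ) a := by
    simpa using (hasDerivAt_id a).const_sub (1:ℝ)
  have hml2 : HasDerivAt (fun x : ℝ => (1 - x) * Real.log (1 - x))
      ((Real.log (1 - a) + 1) * (-1)) a := by
    have h0' : (0:ℝ) < 1 - a := by linarith
    have inner : HasDerivAt (fun y : ℝ => y * Real.log y) (Real.log (1 - a) + 1) (1 - a) := by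
      have : HasDerivAt (fun y : ℝ => y * Real.log y) (1 * Real.log (1 - a) + id (1 - a) * (1 - a)⁻¹) (1 - a) :=
        (hasDerivAt_id (1 - a)).mul (Real.hasDerivAt_log h0'.ne')
      convert this using 1
      simp [h0'.ne']
    exact inner.comp a hone
  have : HasDerivAt (fun x : ℝ => (-(x * Real.log x) - ((1 - x) * Real.log (1 - x))) / Real.log 2)
      ((-(Real.log a + 1) - (Real.log (1 - a) + 1) * (-1)) / Real.log 2) a :=
    (hml.neg.sub hml2).div_const _
  rw [binEnt_eq]
  convert this using 1
  simp only [Real.logb]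
  ring

lemma gfun_hasDerivAt {α : ℝ} (h0 : 0 < α) (h1 : α < 1/2) :
    HasDerivAt gfun (Real.logb 2 ((2*α - α^2) / (1 - α^2))) α := by
  have hi : HasDerivAt (fun x : ℝ => (1 + x) / 3) (1/3 : ℝ) α := by
    simpa using (((hasDerivAt_id α).const_add 1).div_const 3)
  have ha1 : (0:ℝ) < (1 + α) / 3 := by linarith
  have ha2 : (1 + α) / 3 < 1 := by linarith
  have hcomp : HasDerivAt (fun x : ℝ => binEnt ((1 + x) / 3))
      ((Real.logb 2 (1 - (1 + α)/3) - Real.logb 2 ((1 + α)/3)) * (1/3)) α :=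
    (binEnt_hasDerivAt ha1 ha2).comp (h := fun x : ℝ => (1 + x) / 3) α hi
  have hmain : HasDerivAt gfun
      (3 * ((Real.logb 2 (1 - (1 + α)/3) - Real.logb 2 ((1 + α)/3)) * (1/3)) -
        (Real.logb 2 (1 - α) - Real.logb 2 α)) α := by
    have := ((hcomp.const_mul 3).sub_const 2).sub (binEnt_hasDerivAt h0 (by linarith))
    exact this
  convert hmain using 1
  have hα : α ≠ 0 := h0.ne'
  have h2α : (2 - α) ≠ 0 := by linarith
  have h1α : (1 - α) ≠ 0 := by intro h; linarith [h]
  have h1α' : (1 + α) ≠ 0 := by positivity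
  have e1 : (1 : ℝ) - (1 + α)/3 = (2 - α)/3 := by ring
  have e2 : (2*α - α^2) / (1 - α^2) = (α * (2 - α)) / ((1 - α) * (1 + α)) := by ring
  rw [e1, e2, Real.logb_div (mul_ne_zero hα h2α) (mul_ne_zero h1α h1α'),
    Real.logb_mul hα h2α, Real.logb_mul h1α h1α',
    Real.logb_div h2α (by norm_num : (3:ℝ) ≠ 0),
    Real.logb_div h1α' (by norm_num : (3:ℝ) ≠ 0)]
  ring

lemma gfun_deriv_neg {α : ℝ} (h0 : 0 < α) (h1 : α < 1/2) :
    Real.logb 2 ((2*α - α^2) / (1 - α^2)) < 0 := by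
  have hn : (0:ℝ) < 2*α - α^2 := by nlinarith
  have hd : (0:ℝ) < 1 - α^2 := by nlinarith
  have hlt : (2*α - α^2) / (1 - α^2) < 1 := by
    rw [div_lt_one hd]; nlinarith
  exact Real.logb_neg one_lt_two (div_pos hn hd) hlt

lemma gfun_strictAntiOn_Icc : StrictAntiOn gfun (Set.Icc (0:ℝ) (1/2)) := by
  have hc : Continuous gfun := by
    have h1 : Continuous fun x : ℝ => binEnt ((1 + x) / 3) :=
      binEnt_continuous.comp ((continuous_const.add continuous_id).div_const 3)
    exact ((continuous_const.mul h1).sub continuous_const).sub binEnt_continuous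
  apply strictAntiOn_of_deriv_neg (convex_Icc 0 (1/2)) hc.continuousOn
  intro x hx
  rw [interior_Icc] at hx
  rw [(gfun_hasDerivAt hx.1 hx.2).deriv]
  exact gfun_deriv_neg hx.1 hx.2

lemma gfun_half : gfun (1/2) = 0 := by
  have hlog : Real.logb 2 (1/2 : ℝ) = -1 := by
    rw [one_div, Real.logb_inv, Real.logb_self_eq_one] <;> norm_num
  rw [gfun, show ((1:ℝ) + 1/2) / 3 = 1/2 by norm_num, binEnt,
    show (1:ℝ) - 1/2 = 1/2 by norm_num, hlog]
  ring

theorem gfun_properties :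
    (∀ α ∈ Set.Ioo (0:ℝ) (1/2),
      HasDerivAt gfun (Real.logb 2 ((2*α - α^2) / (1 - α^2))) α ∧
      Real.logb 2 ((2*α - α^2) / (1 - α^2)) < 0) ∧
    StrictAntiOn gfun (Set.Ioo (0:ℝ) (1/2)) ∧
    gfun (1/2) = 0 ∧
    (∀ α ∈ Set.Icc (0:ℝ) (1/2), 0 ≤ gfun α) := by
  refine ⟨fun α hα => ⟨gfun_hasDerivAt hα.1 hα.2, gfun_deriv_neg hα.1 hα.2⟩,
    gfun_strictAntiOn_Icc.mono Set.Ioo_subset_Icc_self, gfun_half, ?_⟩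
  intro α hα
  rcases eq_or_lt_of_le hα.2 with h | h
  · rw [h, gfun_half]
  · have := gfun_strictAntiOn_Icc hα (Set.right_mem_Icc.mpr (by norm_num)) h
    rw [gfun_half] at this
    linarith
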